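/- For a definite matrix A and any subeigenvector y ∈ V*(A), every critical edge (i,j) satisfies a_ij y_j = y_i. -/

import Mathlib

open Finset

/-- Max-times matrix product: `(A ⊗ B) i j = max_k (A i k * B k j)`. -/
noncomputable def mProd {n : ℕ} (A B : Matrix (Fin n) (Fin n) NNReal) :
    Matrix (Fin n) (Fin n) NNReal :=
  fun i j => univ.sup fun k => A i k * B k j

/-- Max-algebraic matrix powers, `mPow A 0 = I`. -/
noncomputable def mPow {n : ℕ} (A : Matrix (Fin n) (Fin n) NNReal) :
    ℕ → Matrix (Fin n) (Fin n) NNReal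
  | 0 => fun i j => if i = j then 1 else 0
  | k + 1 => mProd (mPow A k) A

/-- Kleene star `A* = I ⊕ A ⊕ ... ⊕ A^{n-1}` in max algebra. -/
noncomputable def klStar {n : ℕ} (A : Matrix (Fin n) (Fin n) NNReal) :
    Matrix (Fin n) (Fin n) NNReal :=
  fun i j => (Finset.range n).sup fun k => mPow A k i j

/-- Partial "sums" `I ⊕ A ⊕ ... ⊕ A^m` of the Kleene star series. -/
noncomputable def kPartial {n : ℕ} (A : Matrix (Fin n) (Fin n) NNReal) (m : ℕ) :
    Matrix (Fin n) (Fin n) NNReal :=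
  fun i j => (Finset.range (m + 1)).sup fun k => mPow A k i j

/-- The weight of the cycle given by the list `l` (with wrap-around edge). -/
def cycleWeight {n : ℕ} (A : Matrix (Fin n) (Fin n) NNReal) (l : List (Fin n)) : NNReal :=
  ((l.zip (l.rotate 1)).map fun p => A p.1 p.2).prod

/-- The geometric mean of a cycle: `w(σ,A)^{1/k}`. -/
noncomputable def cycleMean {n : ℕ} (A : Matrix (Fin n) (Fin n) NNReal) (l : List (Fin n)) :
    NNReal :=
  (cycleWeight A l) ^ ((l.length : ℝ)⁻¹)

/-- The maximum cycle geometric mean `λ(A)`. -/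
noncomputable def maxCycleMean {n : ℕ} (A : Matrix (Fin n) (Fin n) NNReal) : NNReal :=
  sSup {x | ∃ l : List (Fin n), l ≠ [] ∧ x = cycleMean A l}

/-- `(i,j)` is a critical edge: it lies on a cycle attaining `λ(A)`. -/
def criticalEdge {n : ℕ} (A : Matrix (Fin n) (Fin n) NNReal) (i j : Fin n) : Prop :=
  ∃ l : List (Fin n), l ≠ [] ∧ cycleMean A l = maxCycleMean A ∧ (i, j) ∈ l.zip (l.rotate 1)

/-- Max-algebraic matrix-vector product. -/
noncomputable def mVec {n : ℕ} (A : Matrix (Fin n) (Fin n) NNReal) (x : Fin n → NNReal) :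
    Fin n → NNReal :=
  fun i => univ.sup fun j => A i j * x j


private lemma list_prod_le_nnreal {α : Type*} (f g : α → NNReal) :
    ∀ l : List α, (∀ a ∈ l, f a ≤ g a) → (l.map f).prod ≤ (l.map g).prod := by
  intro l
  induction l with
  | nil => simp
  | cons a t ih =>
    intro h
    simp only [List.map_cons, List.prod_cons]
    exact mul_le_mul' (h a (by simp)) (ih fun b hb => h b (by simp [hb]))

private lemma list_eq_of_prod_nnreal {α : Type*} (f g : α → NNReal) :
    ∀ l : List α, (∀ a ∈ l, f a ≤ g a) → (∀ a ∈ l, g a ≠ 0) →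
      (l.map f).prod = (l.map g).prod → ∀ a ∈ l, f a = g a := by
  intro l
  induction l with
  | nil => simp
  | cons a t ih =>
    intro hle hpos hprod b hb
    simp only [List.map_cons, List.prod_cons] at hprod
    have hle' : ∀ c ∈ t, f c ≤ g c := fun c hc => hle c (by simp [hc])
    have hpos' : ∀ c ∈ t, g c ≠ 0 := fun c hc => hpos c (by simp [hc])
    have hPf : (t.map f).prod ≤ (t.map g).prod := list_prod_le_nnreal f g t hle'
    have hga : g a ≠ 0 := hpos a (by simp)
    have hPg : (t.map g).prod ≠ 0 := by
      apply List.prod_ne_zero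
      intro h0
      obtain ⟨c, hc, hc0⟩ := List.mem_map.mp h0
      exact (hpos' c hc) hc0
    have hfa : f a ≤ g a := hle a (by simp)
    -- all inequalities are equalities
    have h1 : g a * (t.map f).prod = g a * (t.map g).prod := by
      apply le_antisymm
      · exact mul_le_mul_right hPf _
      · calc g a * (t.map g).prod = f a * (t.map f).prod := hprod.symm
          _ ≤ g a * (t.map f).prod := mul_le_mul_left hfa _
    have hPeq : (t.map f).prod = (t.map g).prod := mul_left_cancel₀ hga h1
    have hfeq : f a = g a := by
      have h2 : f a * (t.map g).prod = g a * (t.map g).prod := by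
        rw [← hPeq]; rw [hprod, hPeq]
      exact mul_right_cancel₀ hPg h2
    rcases List.mem_cons.mp hb with rfl | hb'
    · exact hfeq
    · exact ih hle' hpos' hPeq b hb'

/-- for definite `A`, every subeigenvector satisfies
`a_ij y_j = y_i` on critical edges. -/
theorem stmt_10 {n : ℕ} (A : Matrix (Fin n) (Fin n) NNReal)
    (hdef : maxCycleMean A = 1) (y : Fin n → NNReal)
    (hy : ∀ i, mVec A y i ≤ y i) (i j : Fin n) (hij : criticalEdge A i j) :
    A i j * y j = y i := by
  obtain ⟨l, hl, hmean, hmem⟩ := hij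
  rw [hdef] at hmean
  have hlen : 0 < l.length := List.length_pos_iff.mpr hl
  -- cycle weight equals 1
  have hW : cycleWeight A l = 1 := by
    unfold cycleMean at hmean
    have h1 : cycleWeight A l ^ (((l.length : ℝ)⁻¹) * (l.length : ℝ)) = 1 := by
      rw [NNReal.rpow_mul, hmean, NNReal.one_rpow]
    rwa [inv_mul_cancel₀ (by exact_mod_cast hlen.ne'), NNReal.rpow_one] at h1
  set E := l.zip (l.rotate 1) with hE
  have hrl : (l.rotate 1).length = l.length := List.length_rotate l 1
  have hElen : E.length = l.length := by
    rw [hE, List.length_zip, hrl, min_self]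
  have hfst : E.map Prod.fst = l := List.map_fst_zip (le_of_eq hrl.symm)
  have hsnd : E.map Prod.snd = l.rotate 1 := List.map_snd_zip (le_of_eq hrl)
  -- no entry of A on the cycle is zero
  have hAne : ∀ p ∈ E, A p.1 p.2 ≠ 0 := by
    intro p hp hzero
    have h0 : (0 : NNReal) ∈ E.map fun q => A q.1 q.2 :=
      List.mem_map.mpr ⟨p, hp, hzero.symm ▸ rfl⟩
    have : cycleWeight A l = 0 := List.prod_eq_zero (by simpa using h0)
    rw [hW] at this
    exact one_ne_zero this
  -- edge inequality from subeigenvector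
  have hedge : ∀ p ∈ E, A p.1 p.2 * y p.2 ≤ y p.1 := by
    intro p _
    exact le_trans (Finset.le_sup (f := fun k => A p.1 k * y k) (Finset.mem_univ p.2)) (hy p.1)
  by_cases hz : ∃ v ∈ l, y v = 0
  · -- zero case: zeros propagate forward around the cycle
    have step : ∀ k (hk : k < l.length) (k2 : ℕ) (hk2 : k2 < l.length),
        (k + 1) % l.length = k2 → y (l[k]) = 0 → y (l[k2]) = 0 := by
      intro k hk k2 hk2 heq h0
      subst heq
      have hkE : k < E.length := hElen ▸ hk
      have hpe : E[k] ∈ E := List.getElem_mem hkE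
      have hk' : k < (l.rotate 1).length := hrl ▸ hk
      have hval : E[k]'hkE = (l[k]'hk, (l.rotate 1)[k]'hk') := List.getElem_zip
      have hrot : (l.rotate 1)[k]'hk' = l[(k + 1) % l.length]'(Nat.mod_lt _ hlen) :=
        List.getElem_rotate l 1 k hk'
      rw [hrot] at hval
      have hle := hedge _ hpe
      rw [hval] at hle hpe
      simp only at hle
      rw [h0] at hle
      have hz2 : A l[k] (l[(k + 1) % l.length]'(Nat.mod_lt _ hlen)) *
          y (l[(k + 1) % l.length]'(Nat.mod_lt _ hlen)) = 0 := le_antisymm hle zero_le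
      rcases mul_eq_zero.mp hz2 with hA0 | hy0
      · exact absurd hA0 (hAne _ hpe)
      · exact hy0
    have full : ∀ m k (hk : k < l.length) (k2 : ℕ) (hk2 : k2 < l.length),
        (k + m) % l.length = k2 → y (l[k]) = 0 → y (l[k2]) = 0 := by
      intro m
      induction m with
      | zero =>
        intro k hk k2 hk2 heq h0
        have : k = k2 := by rwa [Nat.add_zero, Nat.mod_eq_of_lt hk] at heq
        subst this; exact h0
      | succ m ih =>
        intro k hk k2 hk2 heq h0
        have h1 : y (l[(k + m) % l.length]'(Nat.mod_lt _ hlen)) = 0 :=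
          ih k hk ((k + m) % l.length) (Nat.mod_lt _ hlen) rfl h0
        apply step ((k + m) % l.length) (Nat.mod_lt _ hlen) k2 hk2 _ h1
        rw [Nat.mod_add_mod, ← heq]
        ring_nf
    have hall : ∀ v ∈ l, y v = 0 := by
      obtain ⟨v, hv, hv0⟩ := hz
      obtain ⟨k0, hk0, hk0v⟩ := List.mem_iff_getElem.mp hv
      intro w hw
      obtain ⟨k1, hk1, hk1w⟩ := List.mem_iff_getElem.mp hw
      have hm : (k0 + (l.length - k0 + k1)) % l.length = k1 := by
        have h5 : k0 + (l.length - k0 + k1) = l.length + k1 := by omega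
        rw [h5, Nat.add_mod_left, Nat.mod_eq_of_lt hk1]
      have h6 := full (l.length - k0 + k1) k0 hk0 k1 hk1 hm (hk0v ▸ hv0)
      exact hk1w ▸ h6
    have hiE : (i, j) ∈ E := hmem
    have hi : i ∈ l := by
      rw [← hfst]; exact List.mem_map.mpr ⟨(i, j), hiE, rfl⟩
    have hj : j ∈ l := by
      have : j ∈ l.rotate 1 := by
        rw [← hsnd]; exact List.mem_map.mpr ⟨(i, j), hiE, rfl⟩
      exact (List.rotate_perm l 1).mem_iff.mp this
    rw [hall i hi, hall j hj, mul_zero]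
  · -- positive case: product argument
    push_neg at hz
    have hprodeq : (E.map fun p => A p.1 p.2 * y p.2).prod = (E.map fun p => y p.1).prod := by
      rw [List.prod_map_mul]
      have h1 : (E.map fun p => A p.1 p.2).prod = 1 := hW
      rw [h1, one_mul]
      have h2 : (E.map fun p => y p.2) = (l.rotate 1).map y := by
        rw [← hsnd, List.map_map]; rfl
      have h3 : (E.map fun p => y p.1) = l.map y := by
        rw [← hfst, List.map_map]; rfl
      rw [h2, h3]
      exact ((List.rotate_perm l 1).map y).prod_eq
    have hpos : ∀ p ∈ E, y p.1 ≠ 0 := by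
      intro p hp
      have : p.1 ∈ l := by
        rw [← hfst]; exact List.mem_map.mpr ⟨p, hp, rfl⟩
      exact hz p.1 this
    have := list_eq_of_prod_nnreal (fun p => A p.1 p.2 * y p.2) (fun p => y p.1) E
      hedge hpos hprodeq (i, j) hmem
    simpa using this
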